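/- Let H be the heart of a t-structure on a triangulated category D, (T, F) a torsion pair in H, and K = F * T[-1] the right HRS-tilted heart. Then T = K[1] ∩ H and F = K ∩ H. -/

import Mathlib

open CategoryTheory Category Limits Pretriangulated
open scoped ZeroObject

universe v u

namespace SMPaper

variable {C : Type u} [Category.{v} C] [Preadditive C] [HasZeroObject C] [HasShift C ℤ]
  [∀ n : ℤ, (shiftFunctor C n).Additive] [Pretriangulated C]

/-- The image of a set of objects under the `n`-th shift, closed under isomorphism. -/
def shiftSet (S : Set C) (n : ℤ) : Set C :=
  {d | ∃ s ∈ S, Nonempty ((shiftFunctor C n).obj s ≅ d)}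

/-- The extension product `A * B`: objects `d` fitting in a triangle `a → d → b → a[1]`. -/
def star (A B : Set C) : Set C :=
  {d | ∃ (a b : C) (f : a ⟶ d) (g : d ⟶ b) (h : b ⟶ (shiftFunctor C (1 : ℤ)).obj a),
    a ∈ A ∧ b ∈ B ∧ Triangle.mk f g h ∈ (distTriang C)}

/-- `Hom(A, B) = 0`. -/
def homOrth (A B : Set C) : Prop :=
  ∀ ⦃a : C⦄, a ∈ A → ∀ ⦃b : C⦄, b ∈ B → ∀ f : a ⟶ b, f = 0

/-- Right perpendicular `S^⊥`. -/
def rPerp (S : Set C) : Set C := {d | ∀ s ∈ S, ∀ f : s ⟶ d, f = 0}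

/-- Left perpendicular `^⊥S`. -/
def lPerp (S : Set C) : Set C := {d | ∀ s ∈ S, ∀ f : d ⟶ s, f = 0}

def isoClosure (S : Set C) : Set C := {d | ∃ s ∈ S, Nonempty (s ≅ d)}

/-- The extension closure of a set of objects. -/
inductive ExtClosureP (S : Set C) : C → Prop
  | of (s : C) : s ∈ S → ExtClosureP S s
  | zero (z : C) : IsZero z → ExtClosureP S z
  | iso (x y : C) : (x ≅ y) → ExtClosureP S x → ExtClosureP S y
  | ext (a d b : C) (f : a ⟶ d) (g : d ⟶ b) (h : b ⟶ (shiftFunctor C (1 : ℤ)).obj a) :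
      Triangle.mk f g h ∈ (distTriang C) → ExtClosureP S a → ExtClosureP S b → ExtClosureP S d

def extClosure (S : Set C) : Set C := {d | ExtClosureP S d}

/-- `⟨S⟩[i] * ⟨S⟩[i-1] * ⋯ * ⟨S⟩[i-n]`. -/
def prodDown (S : Set C) : ℤ → ℕ → Set C
  | i, 0 => shiftSet (extClosure S) i
  | i, n + 1 => star (shiftSet (extClosure S) i) (prodDown S (i - 1) n)

/-- `susp S = ⋃_{n ≥ 0} ⟨S⟩[n] * ⋯ * ⟨S⟩[0]`. -/
def suspSet (S : Set C) : Set C := {d | ∃ n : ℕ, d ∈ prodDown S n n}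

/-- `cosusp S = ⋃_{n ≥ 0} ⟨S⟩[0] * ⋯ * ⟨S⟩[-n]`. -/
def cosuspSet (S : Set C) : Set C := {d | ∃ n : ℕ, d ∈ prodDown S 0 n}

/-- `cosusp (S[-1]) = ⋃_{n ≥ 0} ⟨S⟩[-1] * ⋯ * ⟨S⟩[-1-n]`. -/
def cosuspNeg (S : Set C) : Set C := {d | ∃ n : ℕ, d ∈ prodDown S (-1) n}

/-- A t-structure `(X, Y)`: full (iso-closed, containing zero) subcategories with
`Hom(X, Y) = 0`, `D = X * Y` and `X[1] ⊆ X`. -/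
structure IsTStructure (X Y : Set C) : Prop where
  isoX : ∀ ⦃x y : C⦄, (x ≅ y) → x ∈ X → y ∈ X
  isoY : ∀ ⦃x y : C⦄, (x ≅ y) → x ∈ Y → y ∈ Y
  zeroX : ∀ z : C, IsZero z → z ∈ X
  zeroY : ∀ z : C, IsZero z → z ∈ Y
  hom : homOrth X Y
  gen : ∀ d : C, d ∈ star X Y
  shift : shiftSet X 1 ⊆ X

/-- A co-t-structure `(W, X)`. -/
structure IsCoTStructure (W X : Set C) : Prop where
  isoW : ∀ ⦃x y : C⦄, (x ≅ y) → x ∈ W → y ∈ W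
  isoX : ∀ ⦃x y : C⦄, (x ≅ y) → x ∈ X → y ∈ X
  zeroW : ∀ z : C, IsZero z → z ∈ W
  zeroX : ∀ z : C, IsZero z → z ∈ X
  hom : homOrth W X
  gen : ∀ d : C, d ∈ star W X
  shift : shiftSet W (-1) ⊆ W

/-- The heart `X ∩ Y[1]` of a t-structure. -/
def heart (X Y : Set C) : Set C := X ∩ shiftSet Y 1

/-- Boundedness of a torsion pair/t-structure. -/
def IsBoundedTS (X Y : Set C) : Prop :=
  ∀ d : C, (∃ n : ℤ, d ∈ shiftSet X n) ∧ (∃ n : ℤ, d ∈ shiftSet Y n)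

/-- A torsion pair `(T, F)` in the heart `H`: `Hom(T, F) = 0` and every object of `H`
is an extension of an object of `F` by an object of `T`. -/
structure IsTorsionPairIn (H T F : Set C) : Prop where
  isoT : ∀ ⦃x y : C⦄, (x ≅ y) → x ∈ T → y ∈ T
  isoF : ∀ ⦃x y : C⦄, (x ≅ y) → x ∈ F → y ∈ F
  subT : T ⊆ H
  subF : F ⊆ H
  hom : homOrth T F
  gen : H ⊆ star T F

/-- `f : x → d` is a right `S`-approximation. -/
def IsRightApprox (S : Set C) {x d : C} (f : x ⟶ d) : Prop :=
  x ∈ S ∧ ∀ ⦃x' : C⦄, x' ∈ S → ∀ g : x' ⟶ d, ∃ h : x' ⟶ x, h ≫ f = g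

/-- `f : d → x` is a left `S`-approximation. -/
def IsLeftApprox (S : Set C) {d x : C} (f : d ⟶ x) : Prop :=
  x ∈ S ∧ ∀ ⦃x' : C⦄, x' ∈ S → ∀ g : d ⟶ x', ∃ h : x ⟶ x', f ≫ h = g

def RightMinimal {x d : C} (f : x ⟶ d) : Prop :=
  ∀ β : x ⟶ x, β ≫ f = f → IsIso β

def LeftMinimal {d x : C} (f : d ⟶ x) : Prop :=
  ∀ β : x ⟶ x, f ≫ β = f → IsIso β

def HasRightApprox (S : Set C) (d : C) : Prop := ∃ (x : C) (f : x ⟶ d), IsRightApprox S f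

def HasLeftApprox (S : Set C) (d : C) : Prop := ∃ (x : C) (f : d ⟶ x), IsLeftApprox S f

def ContravariantlyFiniteIn (S A : Set C) : Prop := ∀ d ∈ A, HasRightApprox S d

def CovariantlyFiniteIn (S A : Set C) : Prop := ∀ d ∈ A, HasLeftApprox S d

/-- An orthogonal collection (semibrick). -/
structure IsOrthogonal (U : Set C) : Prop where
  nonzero : ∀ u ∈ U, ¬ IsZero u
  hom : ∀ ⦃u v : C⦄, u ∈ U → v ∈ U → ¬ Nonempty (u ≅ v) → ∀ f : u ⟶ v, f = 0
  div : ∀ u ∈ U, ∀ f : u ⟶ u, f = 0 ∨ IsIso f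

/-- An `∞`-orthogonal collection. -/
def IsInfOrthogonal (U : Set C) : Prop :=
  IsOrthogonal U ∧ ∀ ⦃u v : C⦄, u ∈ U → v ∈ U → ∀ m : ℤ, 0 < m →
    ∀ f : (shiftFunctor C m).obj u ⟶ v, f = 0

/-- A simple-minded collection. -/
def IsSMC (U : Set C) : Prop :=
  IsInfOrthogonal U ∧ ∀ d : C, ∃ i j : ℤ, j ≤ i ∧ d ∈ prodDown U i (i - j).toNat

/-- `m` is a right mutation `∂_S(d)` of `d` with respect to `S`. -/
def IsRightMutation (S : Set C) (d m : C) : Prop :=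
  (d ∈ S ∧ Nonempty (d ≅ m)) ∨
  (d ∉ S ∧ ∃ (s : C) (f : s ⟶ (shiftFunctor C (1 : ℤ)).obj d)
      (g : (shiftFunctor C (1 : ℤ)).obj d ⟶ m) (h : m ⟶ (shiftFunctor C (1 : ℤ)).obj s),
    IsRightApprox (extClosure S) f ∧ RightMinimal f ∧ Triangle.mk f g h ∈ (distTriang C))

/-- `m` is a left mutation `∂⁻_S(d)` of `d` with respect to `S`. -/
def IsLeftMutation (S : Set C) (d m : C) : Prop :=
  (d ∈ S ∧ Nonempty (d ≅ m)) ∨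
  (d ∉ S ∧ ∃ (s : C) (g : m ⟶ (shiftFunctor C (-1 : ℤ)).obj d)
      (f : (shiftFunctor C (-1 : ℤ)).obj d ⟶ s) (h : s ⟶ (shiftFunctor C (1 : ℤ)).obj m),
    IsLeftApprox (extClosure S) f ∧ LeftMinimal f ∧ Triangle.mk g f h ∈ (distTriang C))

def rightMutationSet (S U : Set C) : Set C := {m | ∃ u ∈ U, IsRightMutation S u m}

def leftMutationSet (S U : Set C) : Set C := {m | ∃ u ∈ U, IsLeftMutation S u m}

/-- `h` is a simple object of the heart `H`. -/
def IsSimpleIn (H : Set C) (h : C) : Prop :=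
  h ∈ H ∧ ¬ IsZero h ∧
    ∀ (a b : C) (f : a ⟶ h) (g : h ⟶ b) (w : b ⟶ (shiftFunctor C (1 : ℤ)).obj a),
      a ∈ H → b ∈ H → Triangle.mk f g w ∈ (distTriang C) → IsZero a ∨ IsZero b

def simplesOf (H : Set C) : Set C := {h | IsSimpleIn H h}

/-- A heart is a length category iff every object has a finite composition series, i.e.
lies in the extension closure of the simple objects. -/
def HeartIsLength (H : Set C) : Prop := H ⊆ extClosure (simplesOf H)

/-- A bounded t-structure with length heart. -/
def IsLengthHeart (X Y : Set C) : Prop :=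
  IsTStructure X Y ∧ IsBoundedTS X Y ∧ HeartIsLength (heart X Y)

/-- An `S`-mutation pair `(A, B)`. -/
def IsSMutationPair (S A B : Set C) : Prop :=
  isoClosure A =
    lPerp S ∩ rPerp S ∩ lPerp (shiftSet S (-1)) ∩ shiftSet (star (extClosure S) B) (-1) ∧
  isoClosure B =
    lPerp S ∩ rPerp S ∩ rPerp (shiftSet S 1) ∩ shiftSet (star A (extClosure S)) 1

/-- The conditions of the SMC Setup. -/
def SMCSetup (S : Set C) : Prop :=
  CovariantlyFiniteIn (extClosure S)
    {d | ∀ s ∈ S, ∀ m : ℤ, m < 0 → ∀ f : d ⟶ (shiftFunctor C m).obj s, f = 0} ∧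
  ContravariantlyFiniteIn (extClosure S)
    {d | ∀ s ∈ S, ∀ m : ℤ, 0 < m → ∀ f : (shiftFunctor C m).obj s ⟶ d, f = 0} ∧
  (∀ d : C, ∃ N : ℤ, ∀ m : ℤ, m ≤ N → ∀ s ∈ S, ∀ f : d ⟶ (shiftFunctor C m).obj s, f = 0) ∧
  (∀ d : C, ∃ N : ℤ, ∀ m : ℤ, N ≤ m → ∀ s ∈ S, ∀ f : (shiftFunctor C m).obj s ⟶ d, f = 0)

/-- `f : p → h` is an epimorphism in the heart `H`, i.e. fits in a triangle
`a → p → h → a[1]` with `a ∈ H`. -/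
def IsEpiIn (H : Set C) {p h : C} (f : p ⟶ h) : Prop :=
  ∃ (a : C) (i : a ⟶ p) (w : h ⟶ (shiftFunctor C (1 : ℤ)).obj a),
    a ∈ H ∧ Triangle.mk i f w ∈ (distTriang C)

/-- `f : h → i` is a monomorphism in the heart `H`. -/
def IsMonoIn (H : Set C) {h i : C} (f : h ⟶ i) : Prop :=
  ∃ (b : C) (q : i ⟶ b) (w : b ⟶ (shiftFunctor C (1 : ℤ)).obj h),
    b ∈ H ∧ Triangle.mk f q w ∈ (distTriang C)

def IsProjectiveIn (H : Set C) (p : C) : Prop :=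
  p ∈ H ∧ ∀ ⦃x y : C⦄ (f : x ⟶ y), x ∈ H → y ∈ H → IsEpiIn H f →
    ∀ g : p ⟶ y, ∃ l : p ⟶ x, l ≫ f = g

def IsInjectiveIn (H : Set C) (i : C) : Prop :=
  i ∈ H ∧ ∀ ⦃x y : C⦄ (f : x ⟶ y), x ∈ H → y ∈ H → IsMonoIn H f →
    ∀ g : x ⟶ i, ∃ l : y ⟶ i, f ≫ l = g

def EnoughProjectivesIn (H : Set C) : Prop :=
  ∀ h ∈ H, ∃ (p : C) (f : p ⟶ h), IsProjectiveIn H p ∧ IsEpiIn H f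

def EnoughInjectivesIn (H : Set C) : Prop :=
  ∀ h ∈ H, ∃ (i : C) (f : h ⟶ i), IsInjectiveIn H i ∧ IsMonoIn H f



section Helpers

variable {X Y : Set C}

/-- Hom vanishing `Hom(x⟦1⟧, t) = 0` for `x ∈ X` and `t ∈ Y⟦1⟧`. -/
lemma hom_zero_shift_one (hXY : IsTStructure X Y) {x t : C} (hx : x ∈ X)
    (ht : t ∈ shiftSet Y 1) (f : (shiftFunctor C (1 : ℤ)).obj x ⟶ t) : f = 0 := by
  obtain ⟨y, hy, ⟨e⟩⟩ := ht
  have h0 : (shiftFunctor C (1 : ℤ)).preimage (f ≫ e.inv) = 0 := hXY.hom hx hy _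
  have h1 : f ≫ e.inv = 0 := by
    rw [← (shiftFunctor C (1 : ℤ)).map_preimage (f ≫ e.inv), h0, Functor.map_zero]
  calc f = (f ≫ e.inv) ≫ e.hom := by simp
  _ = 0 := by rw [h1, zero_comp]

/-- If `t ∈ Y⟦1⟧` then `t⟦-1⟧ ∈ Y`. -/
lemma negShift_mem_Y (hXY : IsTStructure X Y) {t : C} (ht : t ∈ shiftSet Y 1) :
    (shiftFunctor C (-1 : ℤ)).obj t ∈ Y := by
  obtain ⟨y, hy, ⟨e⟩⟩ := ht
  exact hXY.isoY ((shiftShiftNeg y (1 : ℤ)).symm ≪≫ (shiftFunctor C (-1 : ℤ)).mapIso e) hy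

lemma shift_isZero {z : C} (hz : IsZero z) (n : ℤ) :
    IsZero ((shiftFunctor C n).obj z) :=
  (isZero_zero C).of_iso ((shiftFunctor C n).mapIso hz.isoZero ≪≫
    (shiftFunctor C n).mapZeroObject)

lemma zero_mem_heart (hXY : IsTStructure X Y) : (0 : C) ∈ heart X Y :=
  ⟨hXY.zeroX _ (isZero_zero C),
    ⟨0, hXY.zeroY _ (isZero_zero C), ⟨(shiftFunctor C (1 : ℤ)).mapZeroObject⟩⟩⟩

lemma zero_id_triangle_dist {z d : C} (hz : IsZero z) :
    Triangle.mk (0 : z ⟶ d) (𝟙 d) (0 : d ⟶ (shiftFunctor C (1 : ℤ)).obj z) ∈ distTriang C := by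
  refine isomorphic_distinguished _ (contractible_distinguished₁ d) _ ?_
  refine Triangle.isoMk _ _ hz.isoZero (Iso.refl _) (Iso.refl _) ?_ ?_ ?_
  · apply hz.eq_of_src
  · exact (Category.comp_id _).trans (Category.id_comp _).symm
  · apply (shift_isZero (isZero_zero C) 1).eq_of_tgt

lemma id_zero_triangle_dist {d z : C} (hz : IsZero z) :
    Triangle.mk (𝟙 d) (0 : d ⟶ z) (0 : z ⟶ (shiftFunctor C (1 : ℤ)).obj d) ∈ distTriang C := by
  refine isomorphic_distinguished _ (contractible_distinguished d) _ ?_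
  refine Triangle.isoMk _ _ (Iso.refl _) (Iso.refl _) hz.isoZero ?_ ?_ ?_
  · exact (Category.comp_id _).trans (Category.id_comp _).symm
  · apply (isZero_zero C).eq_of_tgt
  · apply hz.eq_of_src

end Helpers

/-- for the right HRS tilted heart `K = F * T[-1]` one has
`T = K[1] ∩ H` and `F = K ∩ H`. -/
theorem torsion_pair_from_tilted_heart {X Y T F : Set C} (hXY : IsTStructure X Y)
    (hTF : IsTorsionPairIn (heart X Y) T F) :
    T = shiftSet (star F (shiftSet T (-1))) 1 ∩ heart X Y ∧
    F = star F (shiftSet T (-1)) ∩ heart X Y := by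
  -- Step 0: `T` and `F` contain zero objects.
  obtain ⟨t₀, f₀, i₀, p₀, w₀, ht₀, hf₀, hd₀⟩ := hTF.gen (zero_mem_heart hXY)
  have hw₀ : IsIso w₀ :=
    (Triangle.isZero₂_iff_isIso₃ _ hd₀).1 (isZero_zero C)
  have hinv : inv w₀ = 0 :=
    hom_zero_shift_one hXY (hTF.subT ht₀).1 (hTF.subF hf₀).2 (inv w₀)
  have hzf₀ : IsZero f₀ := by
    rw [IsZero.iff_id_eq_zero, ← IsIso.hom_inv_id w₀, hinv, comp_zero]
  have hzt₀ : IsZero t₀ := by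
    have h1 : IsZero ((shiftFunctor C (1 : ℤ)).obj t₀) := hzf₀.of_iso (asIso w₀).symm
    exact (shift_isZero h1 (-1)).of_iso (shiftShiftNeg t₀ (1 : ℤ)).symm
  constructor
  · apply Set.eq_of_subset_of_subset
    · -- T ⊆ K⟦1⟧ ∩ H
      intro t ht
      refine ⟨⟨(shiftFunctor C (-1 : ℤ)).obj t,
        ⟨f₀, (shiftFunctor C (-1 : ℤ)).obj t, 0, 𝟙 _, 0, hf₀, ⟨t, ht, ⟨Iso.refl _⟩⟩,
          zero_id_triangle_dist hzf₀⟩, ⟨shiftNegShift t (1 : ℤ)⟩⟩, hTF.subT ht⟩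
    · -- K⟦1⟧ ∩ H ⊆ T
      rintro h ⟨⟨k, ⟨f, b, u, v, w, hf, hb, hd⟩, ⟨e⟩⟩, hH⟩
      obtain ⟨t, ht, ⟨eb⟩⟩ := hb
      obtain ⟨t', f', i, p, w', ht', hf', hd2⟩ := hTF.gen hH
      have hd3 : ((Triangle.mk u v w).rotate.rotate.rotate) ∈ distTriang C :=
        rot_of_distTriang _ (rot_of_distTriang _ (rot_of_distTriang _ hd))
      have hφ : ((Triangle.mk u v w).rotate.rotate.rotate).mor₁ ≫ (e.hom ≫ p) = 0 :=
        hom_zero_shift_one hXY (hTF.subF hf).1 (hTF.subF hf').2 _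
      obtain ⟨ψ, hψ⟩ := Triangle.yoneda_exact₂ _ hd3 (e.hom ≫ p) hφ
      have hψ0 : ψ = 0 := by
        have ε : t ≅ (shiftFunctor C (1 : ℤ)).obj b :=
          (shiftNegShift t (1 : ℤ)).symm ≪≫ (shiftFunctor C (1 : ℤ)).mapIso eb
        have hc : ε.hom ≫ ψ = 0 := hTF.hom ht hf' _
        exact (ε.inv_hom_id_assoc ψ).symm.trans (by rw [hc]; exact comp_zero)
      have hp : p = 0 := by
        have h1 : e.hom ≫ p = 0 := hψ.trans (by rw [hψ0]; exact comp_zero)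
        calc p = e.inv ≫ (e.hom ≫ p) := by simp
        _ = 0 := by rw [h1, comp_zero]
      have hf'0 : IsZero f' := by
        obtain ⟨r, hr⟩ := Triangle.yoneda_exact₃ _ hd2 (𝟙 f')
          (by change p ≫ 𝟙 f' = 0; rw [hp, zero_comp])
        have hr0 : r = 0 :=
          hom_zero_shift_one hXY (hTF.subT ht').1 (hTF.subF hf').2 r
        rw [IsZero.iff_id_eq_zero, hr, hr0]
        exact comp_zero
      have hi : IsIso i := (Triangle.isZero₃_iff_isIso₁ _ hd2).1 hf'0
      exact hTF.isoT (asIso i) ht'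
  · apply Set.eq_of_subset_of_subset
    · -- F ⊆ K ∩ H
      intro f hf
      refine ⟨⟨f, (shiftFunctor C (-1 : ℤ)).obj t₀, 𝟙 f, 0, 0, hf,
        ⟨t₀, ht₀, ⟨Iso.refl _⟩⟩, id_zero_triangle_dist (shift_isZero hzt₀ (-1))⟩,
        hTF.subF hf⟩
    · -- K ∩ H ⊆ F
      rintro h ⟨⟨f, b, u, v, w, hf, hb, hd⟩, hH⟩
      obtain ⟨t, ht, ⟨eb⟩⟩ := hb
      obtain ⟨t', f', i, p, w', ht', hf', hd2⟩ := hTF.gen hH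
      have hiv' : (i ≫ v) ≫ eb.inv = 0 :=
        hXY.hom (hTF.subT ht').1 (negShift_mem_Y hXY (hTF.subT ht).2) _
      have hiv : i ≫ v = 0 := by
        calc i ≫ v = ((i ≫ v) ≫ eb.inv) ≫ eb.hom := by simp
        _ = 0 := by rw [hiv', zero_comp]
      obtain ⟨s, hs⟩ := Triangle.coyoneda_exact₂ _ hd i hiv
      have hi0 : i = 0 := by rw [hs, hTF.hom ht' hf s]; exact zero_comp
      have ht'0 : IsZero t' := by
        obtain ⟨s', hs'⟩ := Triangle.coyoneda_exact₂ _ (inv_rot_of_distTriang _ hd2) (𝟙 t')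
          (by change 𝟙 t' ≫ i = 0; rw [hi0, comp_zero])
        have hs'0 : s' = 0 :=
          hXY.hom (hTF.subT ht').1 (negShift_mem_Y hXY (hTF.subF hf').2) s'
        rw [IsZero.iff_id_eq_zero, hs', hs'0]
        exact zero_comp
      have hp : IsIso p := (Triangle.isZero₁_iff_isIso₂ _ hd2).1 ht'0
      exact hTF.isoF (asIso p).symm hf'
end SMPaper
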